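/- Let A be an n×n symmetric positive definite real matrix, A₀ an n×n symmetric positive definite matrix, S ∈ ℝ^{n×k} with SᵀAS = I, and W₀ a symmetric n×n matrix with W₀S = AS. Let A_k = A₀ + ΔUᵀ + UΔᵀ − USᵀΔUᵀ be the symmetric-Kronecker posterior mean, where Δ = AS − A₀S and U = W₀S(SᵀW₀S)⁻¹. Then A_k is invertible with A_k⁻¹ = A₀⁻¹ − A₀⁻¹AS (SᵀAA₀⁻¹AS)⁻¹ SᵀAA₀⁻¹ + SSᵀ. -/

import Mathlib

open Matrix

lemma key16 {n k : ℕ} (A₀ : Matrix (Fin n) (Fin n) ℝ) (N : Matrix (Fin k) (Fin k) ℝ)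
    (C S : Matrix (Fin n) (Fin k) ℝ)
    (h1 : Sᵀ * C = 1) (h2 : Cᵀ * S = 1)
    (h₀r : A₀ * A₀⁻¹ = 1)
    (hN : Cᵀ * A₀⁻¹ * C = N) (hNr : N * N⁻¹ = 1) :
    (A₀ + (C - A₀ * S) * Cᵀ + C * (Cᵀ - Sᵀ * A₀) - C * Sᵀ * (C - A₀ * S) * Cᵀ) *
      (A₀⁻¹ - A₀⁻¹ * C * N⁻¹ * Cᵀ * A₀⁻¹ + S * Sᵀ) = 1 := by
  have r1 : ∀ X : Matrix (Fin k) (Fin n) ℝ, Sᵀ * (C * X) = X := by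
    intro X; rw [← Matrix.mul_assoc, h1, Matrix.one_mul]
  have r2 : ∀ X : Matrix (Fin k) (Fin n) ℝ, Cᵀ * (S * X) = X := by
    intro X; rw [← Matrix.mul_assoc, h2, Matrix.one_mul]
  have r3 : ∀ X : Matrix (Fin n) (Fin n) ℝ, A₀ * (A₀⁻¹ * X) = X := by
    intro X; rw [← Matrix.mul_assoc, h₀r, Matrix.one_mul]
  have r5 : ∀ X : Matrix (Fin k) (Fin n) ℝ, Cᵀ * (A₀⁻¹ * (C * X)) = N * X := by
    intro X; rw [← Matrix.mul_assoc, ← Matrix.mul_assoc, hN]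
  have r5' : Cᵀ * (A₀⁻¹ * C) = N := by rw [← Matrix.mul_assoc, hN]
  have r6 : ∀ X : Matrix (Fin k) (Fin n) ℝ, N * (N⁻¹ * X) = X := by
    intro X; rw [← Matrix.mul_assoc, hNr, Matrix.one_mul]
  simp only [Matrix.sub_mul, Matrix.mul_sub, Matrix.add_mul, Matrix.mul_add, Matrix.mul_assoc,
    r1, r2, r3, r5, r5', r6, h1, h2, h₀r, hNr, Matrix.mul_one, Matrix.one_mul]
  abel

/-- Closed form of the inverse of the symmetric-Kronecker posterior mean under
the normalization `SᵀAS = I`. -/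
theorem stmt_16
    {n k : ℕ} (A A₀ : Matrix (Fin n) (Fin n) ℝ) (hA : A.PosDef) (hA₀ : A₀.PosDef)
    (S : Matrix (Fin n) (Fin k) ℝ) (hSAS : Sᵀ * A * S = 1)
    (W₀ : Matrix (Fin n) (Fin n) ℝ) (hW₀ : W₀.IsSymm) (hW₀S : W₀ * S = A * S) :
    let Δ := A * S - A₀ * S
    let U := W₀ * S * (Sᵀ * W₀ * S)⁻¹
    let Ak := A₀ + Δ * Uᵀ + U * Δᵀ - U * Sᵀ * Δ * Uᵀ
    IsUnit Ak.det ∧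
      Ak⁻¹ = A₀⁻¹ - A₀⁻¹ * A * S * (Sᵀ * A * A₀⁻¹ * A * S)⁻¹ * Sᵀ * A * A₀⁻¹
        + S * Sᵀ := by
  intro Δ U Ak
  have hAsymm : Aᵀ = A := by
    have h := hA.isHermitian
    rwa [Matrix.IsHermitian, conjTranspose_eq_transpose_of_trivial] at h
  have hA₀symm : A₀ᵀ = A₀ := by
    have h := hA₀.isHermitian
    rwa [Matrix.IsHermitian, conjTranspose_eq_transpose_of_trivial] at h
  set C : Matrix (Fin n) (Fin k) ℝ := A * S with hC
  have hCt : Cᵀ = Sᵀ * A := by rw [hC, transpose_mul, hAsymm]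
  have hStC : Sᵀ * C = 1 := by rw [hC, ← Matrix.mul_assoc, hSAS]
  have hCtS : Cᵀ * S = 1 := by rw [hCt, hSAS]
  -- U = C
  have hU : U = C := by
    show W₀ * S * (Sᵀ * W₀ * S)⁻¹ = C
    rw [Matrix.mul_assoc Sᵀ W₀ S, hW₀S, hStC, inv_one, Matrix.mul_one]
  have hΔ : Δ = C - A₀ * S := rfl
  have hΔt : Δᵀ = Cᵀ - Sᵀ * A₀ := by
    rw [hΔ, transpose_sub, transpose_mul, transpose_mul, hA₀symm, hAsymm]
  have hAk : Ak = A₀ + (C - A₀ * S) * Cᵀ + C * (Cᵀ - Sᵀ * A₀) - C * Sᵀ * (C - A₀ * S) * Cᵀ := by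
    show A₀ + Δ * Uᵀ + U * Δᵀ - U * Sᵀ * Δ * Uᵀ = _
    rw [hU, hΔ, hΔt]
  -- N = Sᵀ A A₀⁻¹ A S = Cᵀ A₀⁻¹ C
  set N : Matrix (Fin k) (Fin k) ℝ := Cᵀ * A₀⁻¹ * C with hNdef
  have hNeq : Sᵀ * A * A₀⁻¹ * A * S = N := by
    rw [hNdef, hCt, hC, Matrix.mul_assoc (Sᵀ * A * A₀⁻¹) A S]
  -- invertibility of A₀ and N
  have hA₀unit : IsUnit A₀.det := isUnit_iff_ne_zero.mpr hA₀.det_pos.ne'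
  have h₀r : A₀ * A₀⁻¹ = 1 := mul_nonsing_inv A₀ hA₀unit
  have hA₀inv : (A₀⁻¹).PosDef := hA₀.inv
  have hCinj : ∀ x : Fin k → ℝ, C *ᵥ x = 0 → x = 0 := by
    intro x hx
    have h : Sᵀ *ᵥ (C *ᵥ x) = 0 := by rw [hx, mulVec_zero]
    rwa [mulVec_mulVec, hStC, one_mulVec] at h
  have hNpd : N.PosDef := by
    rw [posDef_iff_dotProduct_mulVec]
    constructor
    · rw [hNdef, ← conjTranspose_eq_transpose_of_trivial C]
      exact isHermitian_conjTranspose_mul_mul C hA₀inv.isHermitian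
    · intro x hx
      have hx' : C *ᵥ x ≠ 0 := fun h => hx (hCinj x h)
      have h := (posDef_iff_dotProduct_mulVec.mp hA₀inv).2 hx'
      simpa [hNdef, ← mulVec_mulVec, dotProduct_mulVec, vecMul_transpose] using h
  have hNunit : IsUnit N.det := isUnit_iff_ne_zero.mpr hNpd.det_pos.ne'
  have hNr : N * N⁻¹ = 1 := mul_nonsing_inv N hNunit
  -- the right inverse
  have hRHS : A₀⁻¹ - A₀⁻¹ * A * S * (Sᵀ * A * A₀⁻¹ * A * S)⁻¹ * Sᵀ * A * A₀⁻¹ + S * Sᵀ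
      = A₀⁻¹ - A₀⁻¹ * C * N⁻¹ * Cᵀ * A₀⁻¹ + S * Sᵀ := by
    rw [hNeq, Matrix.mul_assoc A₀⁻¹ A S, ← hC,
      Matrix.mul_assoc (A₀⁻¹ * C * N⁻¹) Sᵀ A, ← hCt]
  have key : Ak * (A₀⁻¹ - A₀⁻¹ * C * N⁻¹ * Cᵀ * A₀⁻¹ + S * Sᵀ) = 1 := by
    rw [hAk]
    exact key16 A₀ N C S hStC hCtS h₀r hNdef.symm hNr
  refine ⟨Matrix.isUnit_det_of_right_inverse key, ?_⟩
  rw [hRHS]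
  exact inv_eq_right_inv key
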